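/- For every real number a, the random variable Y := a·U + V⁵ − 10·V³ + 15·V satisfies E[Y²] = a² + 120. -/

import Mathlib

open MeasureTheory ProbabilityTheory Real
open scoped ENNReal NNReal

noncomputable def gm (n : ℕ) : ℝ := ∫ x, x ^ n ∂(gaussianReal 0 1)

lemma gauss_pdf_eq (x : ℝ) : gaussianPDFReal 0 1 x = (Real.sqrt (2 * π))⁻¹ * Real.exp (-(1/2) * x ^ 2) := by
  rw [gaussianPDFReal]
  norm_num
  ring_nf
  exact Or.inl trivial

lemma integrable_pow_exp (n : ℕ) : Integrable (fun x : ℝ => x ^ n * Real.exp (-(1/2) * x ^ 2)) := by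
  have := integrable_rpow_mul_exp_neg_mul_sq (b := 1/2) (by norm_num) (s := (n:ℝ))
    (lt_of_lt_of_le (by norm_num) (Nat.cast_nonneg n))
  simpa [Real.rpow_natCast] using this

lemma integrable_pow_gauss (n : ℕ) : Integrable (fun x : ℝ => x ^ n) (gaussianReal 0 1) := by
  rw [gaussianReal_of_var_ne_zero 0 one_ne_zero,
    integrable_withDensity_iff (measurable_gaussianPDF 0 1)
      (Filter.Eventually.of_forall fun x => ENNReal.ofReal_lt_top)]
  have : (fun x : ℝ => x ^ n * (gaussianPDF 0 1 x).toReal)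
      = fun x : ℝ => (Real.sqrt (2 * π))⁻¹ * (x ^ n * Real.exp (-(1/2) * x ^ 2)) := by
    funext x
    rw [gaussianPDF, ENNReal.toReal_ofReal (gaussianPDFReal_nonneg _ _ _), gauss_pdf_eq]
    ring
  rw [this]
  exact (integrable_pow_exp n).const_mul _

lemma gm_eq (n : ℕ) : gm n = (Real.sqrt (2 * π))⁻¹ * ∫ x, x ^ n * Real.exp (-(1/2) * x ^ 2) := by
  have h : gaussianReal 0 1
      = (volume : Measure ℝ).withDensity (fun x => ((gaussianPDFReal 0 1 x).toNNReal : ℝ≥0∞)) := by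
    rw [gaussianReal_of_var_ne_zero 0 one_ne_zero]; rfl
  rw [gm, h, integral_withDensity_eq_integral_smul ((measurable_gaussianPDFReal 0 1).real_toNNReal)]
  rw [← integral_const_mul]
  congr 1
  funext x
  rw [NNReal.smul_def, Real.coe_toNNReal _ (gaussianPDFReal_nonneg _ _ _), gauss_pdf_eq]
  simp [smul_eq_mul]
  ring

lemma int_exp_odd {n : ℕ} (hn : Odd n) : ∫ x : ℝ, x ^ n * Real.exp (-(1/2) * x ^ 2) = 0 := by
  set f : ℝ → ℝ := fun x => x ^ n * Real.exp (-(1/2) * x ^ 2) with hf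
  have h1 : ∀ x, f (-x) = - f x := by
    intro x
    simp only [hf, hn.neg_pow, neg_sq]
    ring
  have h2 : ∫ x, f (-x) = ∫ x, f x := integral_neg_eq_self f volume
  simp_rw [h1, integral_neg] at h2
  linarith

lemma gm_odd {n : ℕ} (hn : Odd n) : gm n = 0 := by
  rw [gm_eq, int_exp_odd hn, mul_zero]

lemma int_exp_even {n : ℕ} (hn : Even n) :
    ∫ x : ℝ, x ^ n * Real.exp (-(1/2) * x ^ 2)
      = 2 * (((1:ℝ)/2) ^ (-((n:ℝ) + 1) / 2) * (1 / 2) * Real.Gamma (((n:ℝ) + 1) / 2)) := by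
  set f : ℝ → ℝ := fun x => x ^ n * Real.exp (-(1/2) * x ^ 2) with hf
  have hint := integrable_pow_exp n
  have h0 : ∫ x, f x = (∫ x in Set.Iic (0:ℝ), f x) + ∫ x in Set.Ioi (0:ℝ), f x :=
    (intervalIntegral.integral_Iic_add_Ioi hint.integrableOn hint.integrableOn).symm
  have h1 : ∀ x, f (-x) = f x := by
    intro x
    simp only [hf, hn.neg_pow, neg_sq]
  have h2 : (∫ x in Set.Iic (0:ℝ), f x) = ∫ x in Set.Ioi (0:ℝ), f x := by
    rw [show Set.Iic (0:ℝ) = Set.Iic (-(0:ℝ)) by norm_num, ← integral_comp_neg_Ioi]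
    simp_rw [h1]
  have h3 : (∫ x in Set.Ioi (0:ℝ), f x)
      = ((1:ℝ)/2) ^ (-((n:ℝ) + 1) / 2) * (1 / 2) * Real.Gamma (((n:ℝ) + 1) / 2) := by
    have := integral_rpow_mul_exp_neg_mul_rpow (p := 2) (q := (n:ℝ)) (b := 1/2)
      (by norm_num) (lt_of_lt_of_le (by norm_num) (Nat.cast_nonneg n)) (by norm_num)
    rw [← this]
    refine setIntegral_congr_fun measurableSet_Ioi (fun x hx => ?_)
    rw [hf]
    rw [show ((n:ℝ)) = ((n:ℕ):ℝ) by norm_num, Real.rpow_natCast,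
      show ((2:ℝ)) = ((2:ℕ):ℝ) by norm_num, Real.rpow_natCast]
  rw [h0, h2, h3]; ring

lemma gm_even_eq (k : ℕ) : gm (2*k) = 2 ^ k * Real.Gamma ((k:ℝ) + 1/2) / Real.sqrt π := by
  rw [gm_eq, int_exp_even (even_two_mul k)]
  have hc : ((2*k:ℕ):ℝ) = 2 * k := by push_cast; ring
  rw [hc]
  have h1 : ((1:ℝ)/2) ^ (-(2*(k:ℝ) + 1) / 2) = 2 ^ (k:ℕ) * Real.sqrt 2 := by
    rw [show ((1:ℝ)/2) = 2⁻¹ by norm_num, Real.inv_rpow (by norm_num),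
      show (-(2*(k:ℝ)+1)/2) = -((k:ℝ) + 1/2) by ring, Real.rpow_neg (by norm_num), inv_inv,
      Real.rpow_add (by norm_num), Real.rpow_natCast, Real.sqrt_eq_rpow]
  have h2 : (2*(k:ℝ) + 1) / 2 = (k:ℝ) + 1/2 := by ring
  rw [h1, h2, Real.sqrt_mul (by norm_num) π]
  have hs2 : Real.sqrt 2 ≠ 0 := by positivity
  have hsp : Real.sqrt π ≠ 0 := by positivity
  field_simp

lemma gamma_half : Real.Gamma ((0:ℝ) + 1/2) = Real.sqrt π := by
  rw [zero_add, Real.Gamma_one_half_eq, Real.sqrt_eq_rpow]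

lemma gamma_step (x : ℝ) (hx : x + 1/2 ≠ 0) :
    Real.Gamma ((x+1) + 1/2) = (x + 1/2) * Real.Gamma (x + 1/2) := by
  rw [show (x+1) + 1/2 = (x + 1/2) + 1 by ring, Real.Gamma_add_one hx]

lemma gm0 : gm 0 = 1 := by
  simp [gm]

lemma gammaH : Real.Gamma ((1:ℝ)/2) = Real.sqrt π := by
  rw [Real.Gamma_one_half_eq, Real.sqrt_eq_rpow]

lemma gamma32 : Real.Gamma ((3:ℝ)/2) = (1/2) * Real.sqrt π := by
  rw [show (3:ℝ)/2 = 1/2 + 1 by norm_num, Real.Gamma_add_one (by norm_num), gammaH]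

lemma gamma52 : Real.Gamma ((5:ℝ)/2) = (3/4) * Real.sqrt π := by
  rw [show (5:ℝ)/2 = 3/2 + 1 by norm_num, Real.Gamma_add_one (by norm_num), gamma32]; ring

lemma gamma72 : Real.Gamma ((7:ℝ)/2) = (15/8) * Real.sqrt π := by
  rw [show (7:ℝ)/2 = 5/2 + 1 by norm_num, Real.Gamma_add_one (by norm_num), gamma52]; ring

lemma gamma92 : Real.Gamma ((9:ℝ)/2) = (105/16) * Real.sqrt π := by
  rw [show (9:ℝ)/2 = 7/2 + 1 by norm_num, Real.Gamma_add_one (by norm_num), gamma72]; ring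

lemma gamma112 : Real.Gamma ((11:ℝ)/2) = (945/32) * Real.sqrt π := by
  rw [show (11:ℝ)/2 = 9/2 + 1 by norm_num, Real.Gamma_add_one (by norm_num), gamma92]; ring

lemma sqrtpi_ne : Real.sqrt π ≠ 0 := by positivity

lemma gm2 : gm 2 = 1 := by
  have := gm_even_eq 1
  norm_num at this
  rw [this, gamma32]
  field_simp

lemma gm4 : gm 4 = 3 := by
  have := gm_even_eq 2
  norm_num at this
  rw [this, gamma52]
  field_simp

lemma gm6 : gm 6 = 15 := by
  have := gm_even_eq 3
  norm_num at this
  rw [this, gamma72]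
  field_simp

lemma gm8 : gm 8 = 105 := by
  have := gm_even_eq 4
  norm_num at this
  rw [this, gamma92]
  field_simp

lemma gm10 : gm 10 = 945 := by
  have := gm_even_eq 5
  norm_num at this
  rw [this, gamma112]
  field_simp

lemma map_pow_int {Ω : Type*} [MeasurableSpace Ω] (μ : Measure Ω)
    (U : Ω → ℝ) (hUm : Measurable U) (hU : Measure.map U μ = gaussianReal 0 1) (n : ℕ) :
    Integrable (fun ω => U ω ^ n) μ := by
  have h1 : Integrable (fun x : ℝ => x ^ n) (Measure.map U μ) := hU ▸ integrable_pow_gauss n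
  exact (integrable_map_measure ((measurable_id.pow_const n).aestronglyMeasurable)
    hUm.aemeasurable).mp h1

lemma map_pow_eq {Ω : Type*} [MeasurableSpace Ω] (μ : Measure Ω)
    (U : Ω → ℝ) (hUm : Measurable U) (hU : Measure.map U μ = gaussianReal 0 1) (n : ℕ) :
    ∫ ω, U ω ^ n ∂μ = gm n := by
  rw [gm, ← hU]
  exact (integral_map hUm.aemeasurable
    ((measurable_id.pow_const n).aestronglyMeasurable)).symm

theorem stmt_10
    {Ω : Type*} [MeasurableSpace Ω] (μ : Measure Ω) [IsProbabilityMeasure μ]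
    (U W : Ω → ℝ) (hUm : Measurable U) (hWm : Measurable W)
    (hUW : IndepFun U W μ)
    (hU : Measure.map U μ = gaussianReal 0 1)
    (hW : Measure.map W μ = gaussianReal 0 1)
    (ρ : ℝ) (hρ : ρ ∈ Set.Icc (-1 : ℝ) 1)
    (V : Ω → ℝ) (hV : ∀ ω, V ω = ρ * U ω + Real.sqrt (1 - ρ ^ 2) * W ω)
    (a : ℝ) (Y : Ω → ℝ) (hY : ∀ ω, Y ω = a * U ω + (V ω) ^ 5 - 10 * (V ω) ^ 3 + 15 * V ω) :
    ∫ ω, (Y ω) ^ 2 ∂μ = a ^ 2 + 120 := by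
  set s : ℝ := Real.sqrt (1 - ρ ^ 2) with hsdef
  have hρ2 : ρ ^ 2 ≤ 1 := by
    obtain ⟨h1, h2⟩ := hρ
    nlinarith
  have hs : s ^ 2 = 1 - ρ ^ 2 := Real.sq_sqrt (by linarith)
  -- integrability of powers
  have intU : ∀ n, Integrable (fun ω => U ω ^ n) μ := map_pow_int μ U hUm hU
  have intW : ∀ n, Integrable (fun ω => W ω ^ n) μ := map_pow_int μ W hWm hW
  have EU : ∀ n, ∫ ω, U ω ^ n ∂μ = gm n := map_pow_eq μ U hUm hU
  have EW : ∀ n, ∫ ω, W ω ^ n ∂μ = gm n := map_pow_eq μ W hWm hW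
  have indpow : ∀ j k : ℕ, IndepFun (fun ω => U ω ^ j) (fun ω => W ω ^ k) μ :=
    fun j k => hUW.comp (measurable_id.pow_const j) (measurable_id.pow_const k)
  have intUW : ∀ j k : ℕ, Integrable (fun ω => U ω ^ j * W ω ^ k) μ :=
    fun j k => (indpow j k).integrable_mul (intU j) (intW k)
  have EUW : ∀ j k : ℕ, ∫ ω, U ω ^ j * W ω ^ k ∂μ = gm j * gm k := by
    intro j k
    rw [← EU j, ← EW k]
    exact (indpow j k).integral_fun_mul_eq_mul_integral (intU j).aestronglyMeasurable (intW k).aestronglyMeasurable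
  -- binomial expansion of V powers
  have hVpow : ∀ (n : ℕ) (ω : Ω), V ω ^ n
      = ∑ j ∈ Finset.range (n+1), ρ ^ j * s ^ (n-j) * (n.choose j) * (U ω ^ j * W ω ^ (n-j)) := by
    intro n ω
    rw [hV ω, add_pow]
    refine Finset.sum_congr rfl fun j hj => ?_
    ring
  have intV : ∀ n, Integrable (fun ω => V ω ^ n) μ := by
    intro n
    have : (fun ω => V ω ^ n)
        = fun ω => ∑ j ∈ Finset.range (n+1),
            ρ ^ j * s ^ (n-j) * (n.choose j) * (U ω ^ j * W ω ^ (n-j)) := funext (hVpow n)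
    rw [this]
    exact integrable_finset_sum _ fun j _ => ((intUW j (n-j)).const_mul _)
  have EV : ∀ n, ∫ ω, V ω ^ n ∂μ
      = ∑ j ∈ Finset.range (n+1), ρ ^ j * s ^ (n-j) * (n.choose j) * (gm j * gm (n-j)) := by
    intro n
    rw [integral_congr_ae (Filter.Eventually.of_forall (hVpow n)),
      integral_finset_sum _ fun j _ => ((intUW j (n-j)).const_mul _)]
    exact Finset.sum_congr rfl fun j _ => by rw [integral_const_mul, EUW]
  -- U * V^n
  have hUVpow : ∀ (n : ℕ) (ω : Ω), U ω * V ω ^ n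
      = ∑ j ∈ Finset.range (n+1),
          ρ ^ j * s ^ (n-j) * (n.choose j) * (U ω ^ (j+1) * W ω ^ (n-j)) := by
    intro n ω
    rw [hV ω, add_pow, Finset.mul_sum]
    refine Finset.sum_congr rfl fun j hj => ?_
    ring
  have intUV : ∀ n, Integrable (fun ω => U ω * V ω ^ n) μ := by
    intro n
    have : (fun ω => U ω * V ω ^ n)
        = fun ω => ∑ j ∈ Finset.range (n+1),
            ρ ^ j * s ^ (n-j) * (n.choose j) * (U ω ^ (j+1) * W ω ^ (n-j)) := funext (hUVpow n)
    rw [this]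
    exact integrable_finset_sum _ fun j _ => ((intUW (j+1) (n-j)).const_mul _)
  have EUV : ∀ n, ∫ ω, U ω * V ω ^ n ∂μ
      = ∑ j ∈ Finset.range (n+1), ρ ^ j * s ^ (n-j) * (n.choose j) * (gm (j+1) * gm (n-j)) := by
    intro n
    rw [integral_congr_ae (Filter.Eventually.of_forall (hUVpow n)),
      integral_finset_sum _ fun j _ => ((intUW (j+1) (n-j)).const_mul _)]
    exact Finset.sum_congr rfl fun j _ => by rw [integral_const_mul, EUW]
  -- evaluate moments
  have gm1 : gm 1 = 0 := gm_odd (by decide)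
  have gm3 : gm 3 = 0 := gm_odd (by decide)
  have gm5 : gm 5 = 0 := gm_odd (by decide)
  have gm7 : gm 7 = 0 := gm_odd (by decide)
  have gm9 : gm 9 = 0 := gm_odd (by decide)
  have EV2 := EV 2
  have EV4 := EV 4
  have EV6 := EV 6
  have EV8 := EV 8
  have EV10 := EV 10
  have EUV1 := EUV 1
  have EUV3 := EUV 3
  have EUV5 := EUV 5
  simp [Finset.sum_range_succ, gm0, gm1, gm2, gm3, gm4, gm5, gm6, gm7, gm8, gm9, gm10]
    at EV2 EV4 EV6 EV8 EV10 EUV1 EUV3 EUV5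
  norm_num [Nat.choose] at EV2 EV4 EV6 EV8 EV10 EUV1 EUV3 EUV5
  -- expand Y^2
  have hY2 : ∀ ω, (Y ω) ^ 2
      = a^2 * U ω ^ 2 + (2*a) * (U ω * V ω ^ 5) + (-20*a) * (U ω * V ω ^ 3)
        + (30*a) * (U ω * V ω ^ 1)
        + (V ω ^ 10 + (-20) * V ω ^ 8 + 130 * V ω ^ 6 + (-300) * V ω ^ 4 + 225 * V ω ^ 2) := by
    intro ω
    rw [hY ω]
    ring
  rw [integral_congr_ae (Filter.Eventually.of_forall hY2)]
  have i1 : Integrable (fun ω => a^2 * U ω ^ 2) μ := (intU 2).const_mul _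
  have i2 : Integrable (fun ω => (2*a) * (U ω * V ω ^ 5)) μ := (intUV 5).const_mul _
  have i3 : Integrable (fun ω => (-20*a) * (U ω * V ω ^ 3)) μ := (intUV 3).const_mul _
  have i4 : Integrable (fun ω => (30*a) * (U ω * V ω ^ 1)) μ := (intUV 1).const_mul _
  have iA : Integrable (fun ω => a^2 * U ω ^ 2 + (2*a) * (U ω * V ω ^ 5)) μ := i1.add i2
  have iB : Integrable (fun ω => a^2 * U ω ^ 2 + (2*a) * (U ω * V ω ^ 5)
      + (-20*a) * (U ω * V ω ^ 3)) μ := iA.add i3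
  have iC : Integrable (fun ω => a^2 * U ω ^ 2 + (2*a) * (U ω * V ω ^ 5)
      + (-20*a) * (U ω * V ω ^ 3) + (30*a) * (U ω * V ω ^ 1)) μ := iB.add i4
  have v8 : Integrable (fun ω => V ω ^ 10 + (-20) * V ω ^ 8) μ :=
    (intV 10).add ((intV 8).const_mul _)
  have v6 : Integrable (fun ω => V ω ^ 10 + (-20) * V ω ^ 8 + 130 * V ω ^ 6) μ :=
    v8.add ((intV 6).const_mul _)
  have v4 : Integrable (fun ω => V ω ^ 10 + (-20) * V ω ^ 8 + 130 * V ω ^ 6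
      + (-300) * V ω ^ 4) μ := v6.add ((intV 4).const_mul _)
  have v2 : Integrable (fun ω => V ω ^ 10 + (-20) * V ω ^ 8 + 130 * V ω ^ 6
      + (-300) * V ω ^ 4 + 225 * V ω ^ 2) μ := v4.add ((intV 2).const_mul _)
  rw [integral_add iC v2, integral_add iB i4, integral_add iA i3, integral_add i1 i2,
    integral_add v4 ((intV 2).const_mul _), integral_add v6 ((intV 4).const_mul _),
    integral_add v8 ((intV 6).const_mul _), integral_add (intV 10) ((intV 8).const_mul _)]
  simp only [integral_const_mul, pow_one]
  rw [EU 2, gm2, EUV5, EUV3, EUV1, EV10, EV8, EV6, EV4, EV2]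
  linear_combination (30*a*ρ*(s^2+ρ^2-1) + 945*(s^2+ρ^2)^4 - 1155*(s^2+ρ^2)^3
    + 795*(s^2+ρ^2)^2 - 105*(s^2+ρ^2) + 120) * hs
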